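/- Let w be a word split at position ⌈|w|/2⌉ into w = u ++ v, and let q satisfy ed(w, q) ≤ d. Then there exists a split q = p' ++ s' with ed(u,p') + ed(v,s') ≤ d such that the split position |p'| lies in the interval [⌈|q|/2⌉ − ⌈d/2⌉, ⌈|q|/2⌉ + ⌈d/2⌉]. -/

import Mathlib

namespace Levenshtein

/-- A cost structure for Levenshtein edit distance (as in the removed
`Mathlib.Data.List.EditDistance.Defs`). -/
structure Cost (α β δ : Type*) where
  delete : α → δ
  insert : β → δ
  substitute : α → β → δ

/-- The default cost structure: unit costs for deletion, insertion and substitution of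
unequal letters, zero for substituting a letter by itself. -/
def defaultCost {α : Type*} [DecidableEq α] : Cost α α ℕ where
  delete _ := 1
  insert _ := 1
  substitute a b := if a = b then 0 else 1

/-- One step of the dynamic program: from the suffix distances of `xs` to `ys`,
compute those of `xs` to `y :: ys`. -/
def impl {α β δ : Type*} [AddZeroClass δ] [Min δ] (C : Cost α β δ)
    (xs : List α) (y : β) (d : {r : List δ // 0 < r.length}) :
    {r : List δ // 0 < r.length} :=
  let ⟨ds, w⟩ := d
  xs.zip (ds.zip ds.tail) |>.foldr
    (init := ⟨[C.insert y + ds.getLast (List.ne_nil_of_length_pos w)], by simp⟩)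
    (fun ⟨x, d₀, d₁⟩ ⟨r, w⟩ =>
      ⟨min (C.delete x + r[0]) (min (C.insert y + d₀) (C.substitute x y + d₁)) :: r, by simp⟩)

end Levenshtein

open Levenshtein in
/-- Edit distances between all suffixes of `xs` and `ys`. -/
def suffixLevenshtein {α β δ : Type*} [AddZeroClass δ] [Min δ] (C : Cost α β δ)
    (xs : List α) (ys : List β) : {r : List δ // 0 < r.length} :=
  ys.foldr
    (impl C xs)
    (xs.foldr (init := ⟨[0], by simp⟩) (fun a ⟨r, w⟩ => ⟨(C.delete a + r[0]) :: r, by simp⟩))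

open Levenshtein in
/-- The Levenshtein edit distance with cost structure `C`. -/
def levenshtein {α β δ : Type*} [AddZeroClass δ] [Min δ] (C : Cost α β δ)
    (xs : List α) (ys : List β) : δ :=
  let ⟨r, w⟩ := suffixLevenshtein C xs ys
  r[0]

/-- Levenshtein edit distance with unit costs. -/
def ed {α : Type*} [DecidableEq α] (u v : List α) : ℕ :=
  levenshtein Levenshtein.defaultCost u v


section levaux
variable {α β δ : Type*} [AddZeroClass δ] [Min δ] (C : Levenshtein.Cost α β δ)

theorem levenshtein_impl_cons {x : α} {xs : List α} {y : β} {d : δ} {ds : List δ} {w}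
    (w' : 0 < List.length ds) :
    Levenshtein.impl C (x :: xs) y ⟨d :: ds, w⟩ =
      let ⟨r, w⟩ := Levenshtein.impl C xs y ⟨ds, w'⟩
      ⟨min (C.delete x + r[0]) (min (C.insert y + d) (C.substitute x y + ds[0])) :: r, by simp⟩ :=
  match ds, w' with | _ :: _, _ => rfl

theorem levenshtein_impl_length {xs : List α} {y : β} (d : {r : List δ // 0 < r.length})
    (w : d.1.length = xs.length + 1) :
    (Levenshtein.impl C xs y d).1.length = xs.length + 1 := by
  induction xs generalizing d with
  | nil => rfl
  | cons x xs ih =>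
    dsimp [Levenshtein.impl]
    match d, w with
    | ⟨d₁ :: d₂ :: ds, _⟩, w =>
      dsimp
      congr 1
      exact ih ⟨d₂ :: ds, (by simp)⟩ (by simpa using w)

theorem suffixLevenshtein_length' (xs : List α) (ys : List β) :
    (suffixLevenshtein C xs ys).1.length = xs.length + 1 := by
  induction ys with
  | nil =>
    dsimp [suffixLevenshtein]
    induction xs with
    | nil => rfl
    | cons _ xs ih =>
      simp_all
  | cons y ys ih =>
    dsimp [suffixLevenshtein]
    rw [levenshtein_impl_length]
    exact ih

theorem suffixLevenshtein_cons₁_aux' {x y : {r : List δ // 0 < r.length}}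
    (w₀ : x.1[0]'x.2 = y.1[0]'y.2) (w : x.1.tail = y.1.tail) : x = y := by
  match x, y with
  | ⟨hx :: tx, _⟩, ⟨hy :: ty, _⟩ => simp_all

theorem suffixLevenshtein_cons₁' (x : α) (xs : List α) (ys : List β) :
    suffixLevenshtein C (x :: xs) ys =
      ⟨levenshtein C (x :: xs) ys :: (suffixLevenshtein C xs ys).1, by simp⟩ := by
  induction ys with
  | nil => rfl
  | cons y ys ih =>
    apply suffixLevenshtein_cons₁_aux'
    · rfl
    · show (Levenshtein.impl C (x :: xs) y (suffixLevenshtein C (x :: xs) ys)).1.tail =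
        (Levenshtein.impl C xs y (suffixLevenshtein C xs ys)).1
      rw [ih]
      obtain ⟨ds, wd⟩ := suffixLevenshtein C xs ys
      rw [levenshtein_impl_cons C wd]
      rfl

theorem levenshtein_subtype_head (D : {r : List δ // 0 < r.length}) :
    D.1.head? = some (D.1[0]'D.2) := by
  rcases D with ⟨_ | ⟨a, r⟩, w⟩
  · simp at w
  · rfl

theorem levenshtein_head (xs : List α) (ys : List β) :
    (suffixLevenshtein C xs ys).1.head? = some (levenshtein C xs ys) :=
  levenshtein_subtype_head _

theorem levenshtein_impl_cons_head {x : α} {xs : List α} {y : β} {a : δ} {ds : List δ} {w}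
    (w' : 0 < ds.length) {r0 d1 : δ}
    (h0 : (Levenshtein.impl C xs y ⟨ds, w'⟩).1.head? = some r0) (h1 : ds.head? = some d1) :
    (Levenshtein.impl C (x :: xs) y ⟨a :: ds, w⟩).1.head? =
      some (min (C.delete x + r0) (min (C.insert y + a) (C.substitute x y + d1))) := by
  rw [levenshtein_impl_cons C w']
  revert h0
  generalize Levenshtein.impl C xs y ⟨ds, w'⟩ = R
  rcases R with ⟨_ | ⟨r, rs⟩, wr⟩
  · simp at wr
  · match ds, h1 with
    | b :: ds', h1 =>
      intro h0
      simp at h0 h1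
      subst h0 h1
      rfl

theorem levenshtein_cons_cons (x : α) (xs : List α) (y : β) (ys : List β) :
    levenshtein C (x :: xs) (y :: ys) =
      min (C.delete x + levenshtein C xs (y :: ys))
        (min (C.insert y + levenshtein C (x :: xs) ys)
          (C.substitute x y + levenshtein C xs ys)) := by
  have h := levenshtein_head C (x :: xs) (y :: ys)
  change (Levenshtein.impl C (x :: xs) y (suffixLevenshtein C (x :: xs) ys)).1.head? = _ at h
  rw [suffixLevenshtein_cons₁'] at h
  rw [levenshtein_impl_cons_head C (suffixLevenshtein C xs ys).2
    (levenshtein_head C xs (y :: ys)) (levenshtein_head C xs ys)] at h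
  exact (Option.some.inj h).symm

theorem levenshtein_cons_nil (x : α) (xs : List α) :
    levenshtein C (x :: xs) ([] : List β) = C.delete x + levenshtein C xs ([] : List β) := rfl

@[simp]
theorem levenshtein_nil_nil : levenshtein C ([] : List α) ([] : List β) = 0 := rfl

theorem levenshtein_nil_cons (y : β) (ys : List β) :
    levenshtein C ([] : List α) (y :: ys) = C.insert y + levenshtein C ([] : List α) ys := by
  have h := levenshtein_head C ([] : List α) (y :: ys)
  change (Levenshtein.impl C [] y (suffixLevenshtein C [] ys)).1.head? = _ at h
  have hl := suffixLevenshtein_length' C ([] : List α) ys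
  have h0 := levenshtein_head C ([] : List α) ys
  revert h hl h0
  generalize suffixLevenshtein C ([] : List α) ys = D
  rcases D with ⟨ds, wd⟩
  intro h hl h0
  match ds, wd, hl with
  | [b], _, _ =>
    simp at h0
    subst h0
    exact (Option.some.inj h).symm

end levaux


section aux
variable {α : Type*} [DecidableEq α]

lemma ed_nil_left (ys : List α) : ed [] ys = ys.length := by
  induction ys with
  | nil => simp [ed]
  | cons y ys ih =>
    simp [ed, levenshtein_nil_cons, Levenshtein.defaultCost] at ih ⊢
    omega

lemma ed_nil_right (xs : List α) : ed xs [] = xs.length := by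
  induction xs with
  | nil => simp [ed]
  | cons x xs ih =>
    simp [ed, levenshtein_cons_nil, Levenshtein.defaultCost] at ih ⊢
    omega

lemma ed_cons_cons (x y : α) (xs ys : List α) :
    ed (x :: xs) (y :: ys) = min (1 + ed xs (y :: ys))
      (min (1 + ed (x :: xs) ys) ((if x = y then 0 else 1) + ed xs ys)) := by
  simp [ed, levenshtein_cons_cons, Levenshtein.defaultCost]

lemma ed_le_delete (x : α) (xs ys : List α) : ed (x :: xs) ys ≤ 1 + ed xs ys := by
  cases ys with
  | nil => simp [ed_nil_right]
  | cons y ys => rw [ed_cons_cons]; exact min_le_left _ _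


lemma ed_le_insert (y : α) (xs ys : List α) : ed xs (y :: ys) ≤ 1 + ed xs ys := by
  cases xs with
  | nil => simp [ed_nil_left]
  | cons x xs =>
    rw [ed_cons_cons]
    exact le_trans (min_le_right _ _) (min_le_left _ _)

lemma ed_le_subst (x y : α) (xs ys : List α) :
    ed (x :: xs) (y :: ys) ≤ (if x = y then 0 else 1) + ed xs ys := by
  rw [ed_cons_cons]
  exact le_trans (min_le_right _ _) (min_le_right _ _)

lemma ed_length_bound : ∀ n (xs ys : List α), xs.length + ys.length ≤ n →
    xs.length ≤ ed xs ys + ys.length ∧ ys.length ≤ ed xs ys + xs.length := by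
  intro n
  induction n with
  | zero =>
    intro xs ys h
    have : xs = [] := by cases xs <;> simp_all
    have : ys = [] := by cases ys <;> simp_all
    subst_vars; simp [ed]
  | succ n ih =>
    intro xs ys h
    match xs, ys with
    | [], ys => simp [ed_nil_left]
    | x :: xs, [] => simp [ed_nil_right]
    | x :: xs, y :: ys =>
      simp only [List.length_cons] at h ⊢
      have h1 := ih xs (y :: ys) (by simp_all; omega)
      have h2 := ih (x :: xs) ys (by simp_all; omega)
      have h3 := ih xs ys (by simp_all; omega)
      rw [ed_cons_cons]
      simp only [List.length_cons] at h1 h2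
      have hc : (if x = y then 0 else 1) ≤ 1 := by split <;> omega
      omega

lemma ed_split : ∀ n (u v q : List α), u.length + q.length ≤ n →
    ∃ p s, q = p ++ s ∧ ed u p + ed v s ≤ ed (u ++ v) q := by
  intro n
  induction n with
  | zero =>
    intro u v q h
    have hu : u = [] := by cases u <;> simp_all
    have hq : q = [] := by cases q <;> simp_all
    subst_vars
    exact ⟨[], [], rfl, by simp [ed]⟩
  | succ n ih =>
    intro u v q h
    match u, q with
    | [], q => exact ⟨[], q, rfl, by simp [ed, ed_nil_left]⟩
    | x :: u', [] =>
      refine ⟨[], [], rfl, ?_⟩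
      simp only [ed_nil_right, List.length_append, List.length_cons]
      omega
    | x :: u', y :: q' =>
      obtain ⟨p1, s1, hq1, hb1⟩ := ih u' v (y :: q') (by simp only [List.length_cons] at h ⊢; omega)
      obtain ⟨p2, s2, hq2, hb2⟩ := ih (x :: u') v q' (by simp only [List.length_cons] at h ⊢; omega)
      obtain ⟨p3, s3, hq3, hb3⟩ := ih u' v q' (by simp only [List.length_cons] at h; omega)
      have heq : ed ((x :: u') ++ v) (y :: q') = min (1 + ed (u' ++ v) (y :: q'))
          (min (1 + ed ((x :: u') ++ v) q') ((if x = y then 0 else 1) + ed (u' ++ v) q')) := by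
        rw [List.cons_append, ed_cons_cons]
      rcases le_total (1 + ed (u' ++ v) (y :: q'))
          (min (1 + ed ((x :: u') ++ v) q') ((if x = y then 0 else 1) + ed (u' ++ v) q')) with
        hA | hA
      · refine ⟨p1, s1, hq1, ?_⟩
        have hdel := ed_le_delete x u' p1
        omega
      · rcases le_total (1 + ed ((x :: u') ++ v) q')
            ((if x = y then 0 else 1) + ed (u' ++ v) q') with hB | hB
        · refine ⟨y :: p2, s2, by rw [hq2]; rfl, ?_⟩
          have hins := ed_le_insert y (x :: u') p2
          omega
        · refine ⟨y :: p3, s3, by rw [hq3]; rfl, ?_⟩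
          have hsub := ed_le_subst x y u' p3
          omega

end aux

/-- Splitting lemma: if `w` is split at position `⌈|w|/2⌉` into `u ++ v` and
`ed w q ≤ d`, then `q` splits as `p' ++ s'` with `ed u p' + ed v s' ≤ d` and the split
position `|p'|` lies in the interval `⌈|q|/2⌉ ± ⌈d/2⌉`. -/
theorem exists_split_near_middle {α : Type*} [DecidableEq α]
    (w q : List α) (d : ℕ) (hd : ed w q ≤ d) :
    ∃ p' s' : List α, q = p' ++ s' ∧
      ed (w.take ((w.length + 1) / 2)) p' + ed (w.drop ((w.length + 1) / 2)) s' ≤ d ∧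
      (q.length + 1) / 2 - (d + 1) / 2 ≤ p'.length ∧
      p'.length ≤ (q.length + 1) / 2 + (d + 1) / 2 := by
  set m := (w.length + 1) / 2 with hm
  set u := w.take m with hu
  set v := w.drop m with hv
  have hw : u ++ v = w := List.take_append_drop m w
  obtain ⟨p, s, hq, hb⟩ := ed_split (u.length + q.length) u v q le_rfl
  rw [hw] at hb
  refine ⟨p, s, hq, le_trans hb hd, ?_, ?_⟩
  · have hlen1 := ed_length_bound (u.length + p.length) u p le_rfl
    have hlen2 := ed_length_bound (v.length + s.length) v s le_rfl
    have hul : u.length = min m w.length := by simp [hu]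
    have hvl : v.length = w.length - m := by simp [hv]
    have hql : q.length = p.length + s.length := by rw [hq]; simp
    have hbd : ed u p + ed v s ≤ d := le_trans hb hd
    omega
  · have hlen1 := ed_length_bound (u.length + p.length) u p le_rfl
    have hlen2 := ed_length_bound (v.length + s.length) v s le_rfl
    have hul : u.length = min m w.length := by simp [hu]
    have hvl : v.length = w.length - m := by simp [hv]
    have hql : q.length = p.length + s.length := by rw [hq]; simp
    have hbd : ed u p + ed v s ≤ d := le_trans hb hd
    omega
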